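/- The ordinary generating series of cycles equals that of nonempty sequences: for every real x with 0 ≤ x < 1, the series ∑_{k=1}^{∞} (φ(k)/k)·log(1/(1 − x^k)) converges and its sum equals x/(1 − x), where φ denotes Euler's totient function. -/

import Mathlib

open Finset

/-- Reindexing equivalence: pairs `(k, n)` correspond to a positive integer `m+1` together
with a factorization `(k+1)*(n+1) = m+1`. -/
def cycleEquiv : ℕ × ℕ ≃ Σ m : ℕ, {p : ℕ × ℕ // p ∈ Nat.divisorsAntidiagonal (m + 1)} where
  toFun p := ⟨(p.1 + 1) * (p.2 + 1) - 1, ⟨(p.1 + 1, p.2 + 1), by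
    refine Nat.mem_divisorsAntidiagonal.mpr ⟨?_, by omega⟩
    show (p.1 + 1) * (p.2 + 1) = (p.1 + 1) * (p.2 + 1) - 1 + 1
    have : 1 ≤ (p.1 + 1) * (p.2 + 1) := Nat.one_le_iff_ne_zero.mpr (by positivity)
    omega⟩⟩
  invFun s := (s.2.1.1 - 1, s.2.1.2 - 1)
  left_inv p := by simp
  right_inv s := by
    obtain ⟨m, ⟨⟨a, b⟩, h⟩⟩ := s
    rw [Nat.mem_divisorsAntidiagonal] at h
    have h3 : a * b = m + 1 := h.1
    have ha : a ≠ 0 := by rintro rfl; simp at h3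
    have hb : b ≠ 0 := by rintro rfl; simp at h3
    have h1 : a - 1 + 1 = a := by omega
    have h2 : b - 1 + 1 = b := by omega
    have hm : (a - 1 + 1) * (b - 1 + 1) - 1 = m := by rw [h1, h2, h3]; omega
    subst hm
    refine Sigma.ext rfl (heq_of_eq (Subtype.ext ?_))
    simp [Prod.ext_iff, h1, h2]

/-- **The ordinary generating series of cycles equals that of nonempty sequences:**
for `0 ≤ x < 1`, the series `∑_{k ≥ 1} (φ(k)/k) log (1/(1 - x^k))` converges (indexed
below by `k + 1` over `k : ℕ`, `φ` being Euler's totient function) and its sum is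
`x/(1 - x)`. -/
theorem cycle_ogs_eq_seq_ogs (x : ℝ) (hx0 : 0 ≤ x) (hx1 : x < 1) :
    Summable (fun k : ℕ =>
      ((Nat.totient (k + 1) : ℝ) / (k + 1)) * Real.log (1 / (1 - x ^ (k + 1)))) ∧
    (∑' k : ℕ, ((Nat.totient (k + 1) : ℝ) / (k + 1)) * Real.log (1 / (1 - x ^ (k + 1)))) =
      x / (1 - x) := by
  set F : ℕ × ℕ → ℝ := fun p =>
    ((Nat.totient (p.1 + 1) : ℝ) / (p.1 + 1)) * ((x ^ (p.1 + 1)) ^ (p.2 + 1) / (p.2 + 1))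
    with hF
  have hxk : ∀ k : ℕ, |x ^ (k + 1)| < 1 := by
    intro k
    rw [abs_of_nonneg (pow_nonneg hx0 _)]
    exact pow_lt_one₀ hx0 hx1 (Nat.succ_ne_zero k)
  -- log expansion for each k
  have hlog : ∀ k : ℕ, HasSum (fun n : ℕ => F (k, n))
      (((Nat.totient (k + 1) : ℝ) / (k + 1)) * Real.log (1 / (1 - x ^ (k + 1)))) := by
    intro k
    have h := (Real.hasSum_pow_div_log_of_abs_lt_one (hxk k)).mul_left
      ((Nat.totient (k + 1) : ℝ) / (k + 1))
    rw [one_div, Real.log_inv]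
    exact h
  have hFnn : ∀ p : ℕ × ℕ, 0 ≤ F p := by
    intro p
    apply mul_nonneg (by positivity)
    positivity
  -- summability of F on the product
  have hFsumm : Summable F := by
    have hgeo : Summable (fun p : ℕ × ℕ => x ^ (p.1 + p.2 + 1)) := by
      have : Summable (fun p : ℕ × ℕ => x ^ p.1 * x ^ p.2) :=
        Summable.mul_of_nonneg (summable_geometric_of_lt_one hx0 hx1)
          (summable_geometric_of_lt_one hx0 hx1)
          (fun n => pow_nonneg hx0 n) (fun n => pow_nonneg hx0 n)
      have := this.mul_left x
      apply this.congr
      intro p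
      ring
    apply Summable.of_nonneg_of_le hFnn _ hgeo
    intro p
    have h1 : ((Nat.totient (p.1 + 1) : ℝ) / (p.1 + 1)) ≤ 1 := by
      rw [div_le_one (by positivity)]
      exact_mod_cast Nat.totient_le _
    have h2 : (x ^ (p.1 + 1)) ^ (p.2 + 1) / (p.2 + 1 : ℝ) ≤ x ^ (p.1 + p.2 + 1) := by
      have h3 : (x ^ (p.1 + 1)) ^ (p.2 + 1) ≤ x ^ (p.1 + p.2 + 1) := by
        rw [← pow_mul]
        apply pow_le_pow_of_le_one hx0 hx1.le
        nlinarith [p.1 * p.2]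
      calc (x ^ (p.1 + 1)) ^ (p.2 + 1) / (p.2 + 1 : ℝ) ≤ (x ^ (p.1 + 1)) ^ (p.2 + 1) / 1 := by
            apply div_le_div_of_nonneg_left (by positivity) one_pos ?_ |>.trans_eq rfl
            exact_mod_cast Nat.le_add_left 1 p.2
        _ = (x ^ (p.1 + 1)) ^ (p.2 + 1) := div_one _
        _ ≤ x ^ (p.1 + p.2 + 1) := h3
    calc F p ≤ 1 * ((x ^ (p.1 + 1)) ^ (p.2 + 1) / (p.2 + 1)) :=
          mul_le_mul_of_nonneg_right h1 (by positivity)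
      _ = (x ^ (p.1 + 1)) ^ (p.2 + 1) / (p.2 + 1) := one_mul _
      _ ≤ x ^ (p.1 + p.2 + 1) := h2
  -- summability of the series
  have hsumm : Summable (fun k : ℕ =>
      ((Nat.totient (k + 1) : ℝ) / (k + 1)) * Real.log (1 / (1 - x ^ (k + 1)))) := by
    have := (summable_prod_of_nonneg hFnn).mp hFsumm
    apply this.2.congr
    intro k
    exact ((hlog k).tsum_eq)
  refine ⟨hsumm, ?_⟩
  -- the double sum
  have hdouble : (∑' k : ℕ, ((Nat.totient (k + 1) : ℝ) / (k + 1)) *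
      Real.log (1 / (1 - x ^ (k + 1)))) = ∑' p : ℕ × ℕ, F p := by
    rw [Summable.tsum_prod' hFsumm (fun k => (hlog k).summable)]
    exact tsum_congr fun k => ((hlog k).tsum_eq).symm
  rw [hdouble]
  -- reindex by the equivalence
  rw [← cycleEquiv.symm.tsum_eq F]
  have hsigma : Summable (F ∘ cycleEquiv.symm) := hFsumm.comp_injective cycleEquiv.symm.injective
  rw [show (fun s => F (cycleEquiv.symm s)) = F ∘ cycleEquiv.symm from rfl] at *
  rw [Summable.tsum_sigma' (fun m => (hasSum_fintype _).summable) hsigma]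
  have hfiber : ∀ m : ℕ,
      (∑' q : {p : ℕ × ℕ // p ∈ Nat.divisorsAntidiagonal (m + 1)},
        (F ∘ cycleEquiv.symm) ⟨m, q⟩) = x ^ (m + 1) := by
    intro m
    have : (∑' q : {p : ℕ × ℕ // p ∈ Nat.divisorsAntidiagonal (m + 1)},
        (F ∘ cycleEquiv.symm) ⟨m, q⟩)
        = ∑ p ∈ Nat.divisorsAntidiagonal (m + 1), F (p.1 - 1, p.2 - 1) := by
      exact Finset.tsum_subtype (Nat.divisorsAntidiagonal (m + 1))
        (fun p => F (p.1 - 1, p.2 - 1))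
    rw [this]
    have key : ∀ p ∈ Nat.divisorsAntidiagonal (m + 1),
        F (p.1 - 1, p.2 - 1) = (Nat.totient p.1 : ℝ) * x ^ (m + 1) / (m + 1) := by
      rintro ⟨a, b⟩ h
      rw [Nat.mem_divisorsAntidiagonal] at h
      have h3' : a * b = m + 1 := h.1
      have ha : a ≠ 0 := by rintro rfl; simp at h3'
      have hb : b ≠ 0 := by rintro rfl; simp at h3'
      have h1 : a - 1 + 1 = a := by omega
      have h2 : b - 1 + 1 = b := by omega
      have h3 : a * b = m + 1 := h.1
      simp only [hF, h1, h2]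
      rw [← pow_mul, h3]
      have hbpos : (0 : ℝ) < b := by positivity
      have hapos : (0 : ℝ) < a := by positivity
      have hm : ((m : ℝ) + 1) = (a : ℝ) * b := by exact_mod_cast h3.symm
      rw [hm]
      field_simp
      try ring
      rw [Nat.cast_sub (by omega : 1 ≤ a), Nat.cast_sub (by omega : 1 ≤ b)]; push_cast; ring
    rw [Finset.sum_congr rfl key]
    rw [← Finset.sum_div, ← Finset.sum_mul]
    have htot : (∑ p ∈ Nat.divisorsAntidiagonal (m + 1), (Nat.totient p.1 : ℝ)) = (m + 1 : ℕ) := by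
      rw [Nat.sum_divisorsAntidiagonal (fun i j => (Nat.totient i : ℝ))]
      rw [← Nat.cast_sum]
      exact_mod_cast congrArg (Nat.cast (R := ℝ)) (Nat.sum_totient (m + 1))
    rw [htot]
    push_cast
    field_simp
  rw [tsum_congr hfiber]
  have : (∑' m : ℕ, x ^ (m + 1)) = x / (1 - x) := by
    have hg : HasSum (fun m : ℕ => x ^ m) (1 - x)⁻¹ := hasSum_geometric_of_lt_one hx0 hx1
    have := (hg.mul_left x).tsum_eq
    rw [div_eq_mul_inv, ← this]
    exact tsum_congr fun m => by ring
  rw [this]
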